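/- Let x, y ∈ ℝⁿ, w ∈ ℝⁿ with nonnegative entries, 0 < p ≤ 1 and γ > 0. Define φ(x) = Σⱼ wⱼ (xⱼ² + γ)^{p/2} and the diagonal matrix W_y with entries (W_y)ⱼⱼ = wⱼ (yⱼ² + γ)^{(p-2)/2}. Then φ(x) ≤ φ(y) + (p/2) xᵀ W_y x − (p/2) yᵀ W_y y for all x, y, with equality when x = y. -/

import Mathlib

open Finset

lemma concave_rpow_aux {A B q : ℝ} (hA : 0 < A) (hB : 0 < B) (hq0 : 0 ≤ q) (hq1 : q ≤ 1) :
    A ^ q ≤ B ^ q + q * B ^ (q - 1) * (A - B) := by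
  have hs : (-1 : ℝ) ≤ A / B - 1 := by
    have : 0 ≤ A / B := le_of_lt (div_pos hA hB)
    linarith
  have h := rpow_one_add_le_one_add_mul_self hs hq0 hq1
  have h1 : (A / B) ^ q ≤ 1 + q * (A / B - 1) := by
    simpa using h
  have hBq : (0:ℝ) < B ^ q := Real.rpow_pos_of_pos hB q
  have h2 : (A / B) ^ q * B ^ q ≤ (1 + q * (A / B - 1)) * B ^ q :=
    mul_le_mul_of_nonneg_right h1 hBq.le
  have hL : (A / B) ^ q * B ^ q = A ^ q := by
    rw [Real.div_rpow hA.le hB.le, div_mul_cancel₀]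
    exact hBq.ne'
  have hR : (1 + q * (A / B - 1)) * B ^ q = B ^ q + q * B ^ (q - 1) * (A - B) := by
    have hBq1 : B ^ (q - 1) = B ^ q / B := by
      rw [Real.rpow_sub hB, Real.rpow_one]
    rw [hBq1]
    field_simp
  rw [hL] at h2
  rw [hR] at h2
  exact h2

theorem stmt_1 (n : ℕ) (x y w : Fin n → ℝ) (hw : ∀ j, 0 ≤ w j)
    (p γ : ℝ) (hp : 0 < p) (hp1 : p ≤ 1) (hγ : 0 < γ) :
    (∑ j, w j * ((x j) ^ 2 + γ) ^ (p / 2)) ≤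
        (∑ j, w j * ((y j) ^ 2 + γ) ^ (p / 2))
          + p / 2 * (∑ j, (w j * ((y j) ^ 2 + γ) ^ ((p - 2) / 2)) * (x j) ^ 2)
          - p / 2 * (∑ j, (w j * ((y j) ^ 2 + γ) ^ ((p - 2) / 2)) * (y j) ^ 2) ∧
      (x = y →
        (∑ j, w j * ((x j) ^ 2 + γ) ^ (p / 2)) =
          (∑ j, w j * ((y j) ^ 2 + γ) ^ (p / 2))
            + p / 2 * (∑ j, (w j * ((y j) ^ 2 + γ) ^ ((p - 2) / 2)) * (x j) ^ 2)
            - p / 2 * (∑ j, (w j * ((y j) ^ 2 + γ) ^ ((p - 2) / 2)) * (y j) ^ 2)) := by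
  constructor
  · have key : ∀ j, w j * ((x j) ^ 2 + γ) ^ (p / 2) ≤
        w j * ((y j) ^ 2 + γ) ^ (p / 2)
          + p / 2 * ((w j * ((y j) ^ 2 + γ) ^ ((p - 2) / 2)) * (x j) ^ 2)
          - p / 2 * ((w j * ((y j) ^ 2 + γ) ^ ((p - 2) / 2)) * (y j) ^ 2) := by
      intro j
      have hA : (0:ℝ) < (x j) ^ 2 + γ := by positivity
      have hB : (0:ℝ) < (y j) ^ 2 + γ := by positivity
      have h := concave_rpow_aux hA hB (by linarith : (0:ℝ) ≤ p / 2) (by linarith : p / 2 ≤ 1)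
      have h2 := mul_le_mul_of_nonneg_left h (hw j)
      have e : (p - 2) / 2 = p / 2 - 1 := by ring
      rw [e]
      nlinarith [h2]
    calc (∑ j, w j * ((x j) ^ 2 + γ) ^ (p / 2))
        ≤ ∑ j, (w j * ((y j) ^ 2 + γ) ^ (p / 2)
          + p / 2 * ((w j * ((y j) ^ 2 + γ) ^ ((p - 2) / 2)) * (x j) ^ 2)
          - p / 2 * ((w j * ((y j) ^ 2 + γ) ^ ((p - 2) / 2)) * (y j) ^ 2)) :=
          Finset.sum_le_sum fun j _ => key j
      _ = _ := by rw [Finset.sum_sub_distrib, Finset.sum_add_distrib, ← Finset.mul_sum, ← Finset.mul_sum]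
  · intro hxy
    subst hxy
    ring
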